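/- Let h, m, n be positive integers with m ≥ 2 and let φ denote Euler's totient function. If h ≥ 12/(φ(n)·m) + 8/φ(n), then m·h·φ(n) ≥ 3 + (φ(n)·m·h)/2 + 2·√((φ(n)·m²·h)/2 + 1). -/

import Mathlib

/-- The numerical inequality in the proof of Theorem 1.1: if
`h ≥ 12/(φ(n)·m) + 8/φ(n)` then `m·h·φ(n) ≥ 3 + φ(n)·m·h/2 + 2·√(φ(n)·m²·h/2 + 1)`. -/
theorem stmt_10 (h m n : ℕ) (hh : 0 < h) (hm : 2 ≤ m) (hn : 0 < n)
    (H : (h : ℝ) ≥ 12 / (Nat.totient n * m) + 8 / Nat.totient n) :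
    (m : ℝ) * h * Nat.totient n ≥
      3 + (Nat.totient n : ℝ) * m * h / 2 +
        2 * Real.sqrt ((Nat.totient n : ℝ) * m ^ 2 * h / 2 + 1) := by
  set t : ℝ := (Nat.totient n : ℝ) with hts
  have ht : (1 : ℝ) ≤ t := by
    rw [hts]; exact_mod_cast Nat.one_le_iff_ne_zero.mpr (Nat.totient_pos.mpr hn).ne'
  have hm' : (2 : ℝ) ≤ (m : ℝ) := by exact_mod_cast hm
  have hh' : (1 : ℝ) ≤ (h : ℝ) := by exact_mod_cast hh
  set x : ℝ := t * m * h with hxs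
  have htm : (0 : ℝ) < t * m := by nlinarith
  have hx : x ≥ 12 + 8 * m := by
    have h1 : (h : ℝ) * (t * m) ≥ (12 / (t * m) + 8 / t) * (t * m) := by
      exact mul_le_mul_of_nonneg_right H htm.le
    have ht0 : t ≠ 0 := by linarith
    have htm0 : t * m ≠ 0 := htm.ne'
    rw [add_mul, div_mul_cancel₀ _ htm0] at h1
    have : 8 / t * (t * m) = 8 * m := by field_simp
    rw [this] at h1
    nlinarith
  have hx28 : x ≥ 28 := by nlinarith
  have hA : t * m ^ 2 * h / 2 + 1 ≤ (x / 4 - 3 / 2) ^ 2 := by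
    have hmx : t * m ^ 2 * h = m * x := by ring
    rw [hmx]
    nlinarith [sq_nonneg (x - 12 - 8 * m)]
  have hsqrt : Real.sqrt (t * m ^ 2 * h / 2 + 1) ≤ x / 4 - 3 / 2 := by
    have h1 := Real.sqrt_le_sqrt hA
    rwa [Real.sqrt_sq (by linarith : (0:ℝ) ≤ x / 4 - 3 / 2)] at h1
  have hgoal : (m : ℝ) * h * t = x := by ring
  rw [hgoal]
  nlinarith [hsqrt]
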